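/- arXiv:1507.08855 — 3 statements merged into one kernel-verified Lean document; each statement's English description precedes it below -/
import Mathlib

section
/- For all continuous functions g, h : ℝ → ℝ and every t ≥ 0, one has ((g⋄h)(t))² ≤ (∫₀ᵗ |g(s)| ds)·(|g|□h)(t), where |g| denotes the function s ↦ |g(s)|. -/
open MeasureTheory intervalIntegral

/-- Cauchy–Schwarz for interval integrals of nonnegative continuous functions. -/
lemma cs_interval (u v : ℝ → ℝ) (hu : Continuous u) (hv : Continuous v)
    (hu0 : ∀ x, 0 ≤ u x) (hv0 : ∀ x, 0 ≤ v x) (t : ℝ) (ht : 0 ≤ t) :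
    (∫ s in (0:ℝ)..t, u s * v s) ^ 2 ≤
      (∫ s in (0:ℝ)..t, u s ^ 2) * ∫ s in (0:ℝ)..t, v s ^ 2 := by
  set μ := volume.restrict (Set.Ioc (0:ℝ) t) with hμ
  haveI : IsFiniteMeasure μ := by
    constructor
    rw [hμ, Measure.restrict_apply MeasurableSet.univ, Set.univ_inter, Real.volume_Ioc]
    exact ENNReal.ofReal_lt_top
  have hbd : ∀ (f : ℝ → ℝ), Continuous f → MemLp f (ENNReal.ofReal 2) μ := by
    intro f hf
    obtain ⟨C, hC⟩ := (isCompact_Icc (a := (0:ℝ)) (b := t)).exists_bound_of_continuousOn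
      hf.continuousOn
    refine MemLp.of_bound hf.aestronglyMeasurable C ?_
    filter_upwards [ae_restrict_mem measurableSet_Ioc] with x hx
    exact hC x (Set.Ioc_subset_Icc_self hx)
  have hconj : Real.HolderConjugate 2 2 := Real.HolderConjugate.two_two
  have H := integral_mul_le_Lp_mul_Lq_of_nonneg (μ := μ) hconj
    (Filter.Eventually.of_forall hu0) (Filter.Eventually.of_forall hv0)
    (hbd u hu) (hbd v hv)
  have e1 : (∫ s in (0:ℝ)..t, u s * v s) = ∫ a, u a * v a ∂μ := by
    rw [intervalIntegral.integral_of_le ht]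
  have e2 : (∫ s in (0:ℝ)..t, u s ^ 2) = ∫ a, u a ^ (2:ℝ) ∂μ := by
    rw [intervalIntegral.integral_of_le ht]
    simp [Real.rpow_two, hμ]
  have e3 : (∫ s in (0:ℝ)..t, v s ^ 2) = ∫ a, v a ^ (2:ℝ) ∂μ := by
    rw [intervalIntegral.integral_of_le ht]
    simp [Real.rpow_two, hμ]
  rw [e1, e2, e3]
  set A := ∫ a, u a ^ (2:ℝ) ∂μ with hA
  set B := ∫ a, v a ^ (2:ℝ) ∂μ with hB
  have hA0 : 0 ≤ A := integral_nonneg fun x => Real.rpow_nonneg (hu0 x) _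
  have hB0 : 0 ≤ B := integral_nonneg fun x => Real.rpow_nonneg (hv0 x) _
  have hI0 : 0 ≤ ∫ a, u a * v a ∂μ :=
    integral_nonneg fun x => mul_nonneg (hu0 x) (hv0 x)
  calc (∫ a, u a * v a ∂μ) ^ 2 ≤ (A ^ ((1:ℝ)/2) * B ^ ((1:ℝ)/2)) ^ 2 := by
        apply pow_le_pow_left₀ hI0 H
    _ = A * B := by
        rw [mul_pow, ← Real.rpow_two, ← Real.rpow_two, ← Real.rpow_mul hA0,
          ← Real.rpow_mul hB0]
        norm_num

/-- For functions `g, h : ℝ → ℝ` and `t ≥ 0`: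
`(g⋄h)(t) = ∫₀ᵗ g(t−s)(h(t)−h(s)) ds` and `(g□h)(t) = ∫₀ᵗ g(t−s)(h(t)−h(s))² ds`.
STATEMENT 1: for continuous `g, h` and `t ≥ 0`,
`((g⋄h)(t))² ≤ (∫₀ᵗ |g(s)| ds) · ((|g|□h)(t))`. -/
theorem stmt1 (g h : ℝ → ℝ) (hg : Continuous g) (hh : Continuous h)
    (t : ℝ) (ht : 0 ≤ t) :
    (∫ s in (0:ℝ)..t, g (t - s) * (h t - h s)) ^ 2 ≤
      (∫ s in (0:ℝ)..t, |g s|) * ∫ s in (0:ℝ)..t, |g (t - s)| * (h t - h s) ^ 2 := by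
  set u : ℝ → ℝ := fun s => Real.sqrt |g (t - s)| with hu
  set v : ℝ → ℝ := fun s => Real.sqrt |g (t - s)| * |h t - h s| with hv
  have hgc : Continuous fun s => |g (t - s)| :=
    (hg.comp (continuous_const.sub continuous_id)).abs
  have hucont : Continuous u := hgc.sqrt
  have hvcont : Continuous v := hucont.mul ((continuous_const.sub hh).abs)
  have key := cs_interval u v hucont hvcont (fun x => Real.sqrt_nonneg _)
    (fun x => mul_nonneg (Real.sqrt_nonneg _) (abs_nonneg _)) t ht
  have huv : ∀ s, u s * v s = |g (t - s) * (h t - h s)| := by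
    intro s
    rw [hu, hv]
    simp only []
    rw [← mul_assoc, Real.mul_self_sqrt (abs_nonneg _), abs_mul]
  have hu2 : ∀ s, u s ^ 2 = |g (t - s)| := fun s => Real.sq_sqrt (abs_nonneg _)
  have hv2 : ∀ s, v s ^ 2 = |g (t - s)| * (h t - h s) ^ 2 := by
    intro s
    rw [hv]
    simp only []
    rw [mul_pow, Real.sq_sqrt (abs_nonneg _), sq_abs]
  have step1 : (∫ s in (0:ℝ)..t, g (t - s) * (h t - h s)) ^ 2 ≤
      (∫ s in (0:ℝ)..t, u s * v s) ^ 2 := by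
    rw [← sq_abs]
    apply pow_le_pow_left₀ (abs_nonneg _)
    calc |∫ s in (0:ℝ)..t, g (t - s) * (h t - h s)|
        ≤ ∫ s in (0:ℝ)..t, |g (t - s) * (h t - h s)| :=
          intervalIntegral.abs_integral_le_integral_abs ht
      _ = ∫ s in (0:ℝ)..t, u s * v s := by
          simp_rw [huv]
  have refl : (∫ s in (0:ℝ)..t, |g (t - s)|) = ∫ s in (0:ℝ)..t, |g s| := by
    have := intervalIntegral.integral_comp_sub_left (a := (0:ℝ)) (b := t)
      (fun s => |g s|) t
    simpa using this
  calc (∫ s in (0:ℝ)..t, g (t - s) * (h t - h s)) ^ 2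
      ≤ (∫ s in (0:ℝ)..t, u s * v s) ^ 2 := step1
    _ ≤ (∫ s in (0:ℝ)..t, u s ^ 2) * ∫ s in (0:ℝ)..t, v s ^ 2 := key
    _ = (∫ s in (0:ℝ)..t, |g s|) * ∫ s in (0:ℝ)..t, |g (t - s)| * (h t - h s) ^ 2 := by
        simp_rw [hu2, hv2, refl]
end

section
/- For all continuously differentiable functions g, h : ℝ → ℝ and every t ≥ 0, the following identity holds: 2·(g*h)(t)·h'(t) = (g'□h)(t) − g(t)·h(t)² − (d/dt)[ (g□h)(t) − (∫₀ᵗ g(s) ds)·h(t)² ]. -/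
open MeasureTheory Set intervalIntegral

/-- Fubini for iterated interval integrals of a continuous function over a rectangle. -/
lemma rect_swap (f : ℝ → ℝ → ℝ) (hf : Continuous (Function.uncurry f)) (a b c d : ℝ) :
    (∫ x in a..b, ∫ y in c..d, f x y) = ∫ y in c..d, ∫ x in a..b, f x y := by
  have key : (∫ x in Set.Ioc (a ⊓ b) (a ⊔ b), ∫ y in Set.Ioc (c ⊓ d) (c ⊔ d), f x y)
      = ∫ y in Set.Ioc (c ⊓ d) (c ⊔ d), ∫ x in Set.Ioc (a ⊓ b) (a ⊔ b), f x y := by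
    apply MeasureTheory.integral_integral_swap
    rw [Measure.prod_restrict]
    refine ((hf.locallyIntegrable.integrableOn_isCompact (isCompact_Icc.prod isCompact_Icc)).mono_set
      (Set.prod_mono Set.Ioc_subset_Icc_self Set.Ioc_subset_Icc_self))
  simp only [intervalIntegral.intervalIntegral_eq_integral_uIoc, MeasureTheory.integral_smul,
    Set.uIoc] at *
  rw [key]
  rw [smul_comm]

/-- Derivative of a finite "convolution" `r ↦ ∫_0^r g(r-s) u(s) ds` for `g` of class `C¹`
and `u` continuous. -/
lemma conv_hasDerivAt (g u : ℝ → ℝ) (hg : ContDiff ℝ 1 g) (hu : Continuous u) (t : ℝ) :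
    HasDerivAt (fun r => ∫ s in (0:ℝ)..r, g (r - s) * u s)
      (g 0 * u t + ∫ s in (0:ℝ)..t, deriv g (t - s) * u s) t := by
  have hg' : Continuous (deriv g) := hg.continuous_deriv le_rfl
  have hgc : Continuous g := hg.continuous
  have hG : ∀ a : ℝ, Continuous fun s => g (a - s) * u s := fun a =>
    (hgc.comp (continuous_const.sub continuous_id)).mul hu
  have hGy : Continuous (Function.uncurry fun s y => deriv g (y - s) * u s) := by
    apply Continuous.mul
    · exact hg'.comp (continuous_snd.sub continuous_fst)
    · exact hu.comp continuous_fst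
  set Φ : ℝ → ℝ := fun y => ∫ s in (0:ℝ)..t, deriv g (y - s) * u s with hΦdef
  set B : ℝ → ℝ := (fun r => ∫ s in t..r, ∫ y in t..r, deriv g (y - s) * u s) with hBdef
  have hdiff : ∀ a b s : ℝ, g (a - s) - g (b - s) = ∫ y in b..a, deriv g (y - s) := by
    intro a b s
    rw [intervalIntegral.integral_comp_sub_right (fun y => deriv g y) s,
      intervalIntegral.integral_deriv_eq_sub (fun x _ => (hg.differentiable one_ne_zero) x)
        (hg'.intervalIntegrable _ _)]
  have keyid : ∀ r, (∫ s in (0:ℝ)..r, g (r - s) * u s) =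
      ((∫ s in (0:ℝ)..t, g (t - s) * u s) + (∫ s in t..r, g (t - s) * u s) + B r)
        + ∫ y in t..r, Φ y := by
    intro r
    have split : (∫ s in (0:ℝ)..r, g (r - s) * u s) =
        (∫ s in (0:ℝ)..t, g (r - s) * u s) + ∫ s in t..r, g (r - s) * u s :=
      (intervalIntegral.integral_add_adjacent_intervals ((hG r).intervalIntegrable _ _)
        ((hG r).intervalIntegrable _ _)).symm
    have piece : ∀ a b : ℝ, (∫ s in a..b, g (r - s) * u s) =
        (∫ s in a..b, g (t - s) * u s) + ∫ s in a..b, ∫ y in t..r, deriv g (y - s) * u s := by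
      intro a b
      rw [← intervalIntegral.integral_add ((hG t).intervalIntegrable _ _)]
      · apply intervalIntegral.integral_congr
        intro s _
        have e : (∫ y in t..r, deriv g (y - s) * u s) = (∫ y in t..r, deriv g (y - s)) * u s :=
          intervalIntegral.integral_mul_const _ _
        show g (r - s) * u s = g (t - s) * u s + ∫ y in t..r, deriv g (y - s) * u s
        rw [e, ← hdiff r t s]
        ring
      · apply Continuous.intervalIntegrable
        exact intervalIntegral.continuous_parametric_intervalIntegral_of_continuous' hGy t r
    have swap : (∫ s in (0:ℝ)..t, ∫ y in t..r, deriv g (y - s) * u s)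
        = ∫ y in t..r, Φ y :=
      rect_swap (fun s y => deriv g (y - s) * u s) hGy 0 t t r
    rw [split, piece 0 t, piece t r, swap, hBdef]
    ring
  have H1 : HasDerivAt (fun r => ∫ s in t..r, g (t - s) * u s) (g 0 * u t) t := by
    have := intervalIntegral.integral_hasDerivAt_right ((hG t).intervalIntegrable t t)
      ((hG t).stronglyMeasurableAtFilter _ _) (hG t).continuousAt
    simpa using this
  have hΦcont : Continuous Φ :=
    intervalIntegral.continuous_parametric_intervalIntegral_of_continuous'
      (f := fun y s => deriv g (y - s) * u s)
      (by apply Continuous.mul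
          · exact hg'.comp (continuous_fst.sub continuous_snd)
          · exact hu.comp continuous_snd) 0 t
  have H3 : HasDerivAt (fun r => ∫ y in t..r, Φ y) (Φ t) t :=
    intervalIntegral.integral_hasDerivAt_right (hΦcont.intervalIntegrable t t)
      (hΦcont.stronglyMeasurableAtFilter _ _) hΦcont.continuousAt
  have H2 : HasDerivAt B 0 t := by
    obtain ⟨C, hC⟩ := (isCompact_Icc.prod isCompact_Icc).exists_bound_of_continuousOn
      (s := Icc (t - 1) (t + 1) ×ˢ Icc (t - 1) (t + 1)) hGy.continuousOn
    have hC0 : 0 ≤ C := le_trans (norm_nonneg _) (hC (t, t) (by constructor <;> constructor <;> linarith))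
    have hb : ∀ r ∈ Icc (t - 1) (t + 1), ‖B r‖ ≤ (C * |r - t|) * |r - t| := by
      intro r hr
      have hsub : Set.uIcc t r ⊆ Icc (t - 1) (t + 1) := by
        apply Set.uIcc_subset_Icc ⟨by linarith, by linarith⟩ ⟨hr.1, hr.2⟩
      apply intervalIntegral.norm_integral_le_of_norm_le_const
      intro s hs
      have hs' : s ∈ Icc (t - 1) (t + 1) := hsub (Set.uIoc_subset_uIcc hs)
      apply intervalIntegral.norm_integral_le_of_norm_le_const
      intro y hy
      exact hC (s, y) ⟨hs', hsub (Set.uIoc_subset_uIcc hy)⟩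
    rw [hasDerivAt_iff_isLittleO]
    have hB0 : B t = 0 := intervalIntegral.integral_same
    have h1 : (fun r => B r - B t - (r - t) • (0:ℝ)) =O[nhds t] fun r => (r - t) ^ 2 := by
      rw [Asymptotics.isBigO_iff]
      refine ⟨C, ?_⟩
      filter_upwards [Icc_mem_nhds (by linarith : t - 1 < t) (by linarith : t < t + 1)] with r hr
      have := hb r hr
      simp only [hB0, smul_zero, sub_zero]
      calc ‖B r‖ ≤ (C * |r - t|) * |r - t| := this
        _ = C * ‖(r - t) ^ 2‖ := by
            rw [Real.norm_eq_abs, abs_pow, pow_two]; ring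
    have h2 : (fun r : ℝ => (r - t) ^ 2) =o[nhds t] fun r => r - t := by
      have hlo : (fun r : ℝ => r - t) =o[nhds t] (fun _ => (1:ℝ)) := by
        rw [Asymptotics.isLittleO_one_iff]
        have : Filter.Tendsto (fun r : ℝ => r - t) (nhds t) (nhds (t - t)) :=
          (continuous_id.sub continuous_const).tendsto t
        simpa using this
      simpa [pow_two, one_mul] using
        hlo.mul_isBigO (Asymptotics.isBigO_refl (fun r : ℝ => r - t) (nhds t))
    exact h1.trans_isLittleO h2
  have Hsum := (((hasDerivAt_const t (∫ s in (0:ℝ)..t, g (t - s) * u s)).add H1).add H2).add H3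
  have : (fun r => ((∫ s in (0:ℝ)..t, g (t - s) * u s) + (∫ s in t..r, g (t - s) * u s) + B r)
      + ∫ y in t..r, Φ y) = fun r => ∫ s in (0:ℝ)..r, g (r - s) * u s :=
    funext fun r => (keyid r).symm
  have Hsum' : HasDerivAt (fun r => ((∫ s in (0:ℝ)..t, g (t - s) * u s) + (∫ s in t..r, g (t - s) * u s) + B r)
      + ∫ y in t..r, Φ y) (0 + g 0 * u t + 0 + Φ t) t := Hsum
  rw [this] at Hsum'
  simpa [hΦdef] using Hsum'

/-- for `C¹` functions `g, h : ℝ → ℝ` and every `t ≥ 0`: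
`2·(g*h)(t)·h'(t) = (g'□h)(t) − g(t)·h(t)² − d/dt [ (g□h)(t) − (∫₀ᵗ g(s) ds)·h(t)² ]`,
where `(g*h)(t) = ∫₀ᵗ g(t−s)h(s) ds` and `(g□h)(t) = ∫₀ᵗ g(t−s)(h(t)−h(s))² ds`. -/
theorem stmt2 (g h : ℝ → ℝ) (hg : ContDiff ℝ 1 g) (hh : ContDiff ℝ 1 h)
    (t : ℝ) (ht : 0 ≤ t) :
    2 * (∫ s in (0:ℝ)..t, g (t - s) * h s) * deriv h t =
      (∫ s in (0:ℝ)..t, deriv g (t - s) * (h t - h s) ^ 2) - g t * (h t) ^ 2 -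
        deriv (fun r =>
          (∫ s in (0:ℝ)..r, g (r - s) * (h r - h s) ^ 2) -
            (∫ s in (0:ℝ)..r, g s) * (h r) ^ 2) t := by
  have hgc : Continuous g := hg.continuous
  have hg' : Continuous (deriv g) := hg.continuous_deriv le_rfl
  have hhc : Continuous h := hh.continuous
  have hh2c : Continuous fun s => (h s) ^ 2 := hhc.pow 2
  have hd : HasDerivAt h (deriv h t) t := (hh.differentiable one_ne_zero t).hasDerivAt
  -- derivative of the two convolution pieces
  have Dh := conv_hasDerivAt g h hg hhc t
  have Dh2 := conv_hasDerivAt g (fun s => (h s) ^ 2) hg hh2c t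
  -- the boxed function simplifies
  have hbox : (fun r => (∫ s in (0:ℝ)..r, g (r - s) * (h r - h s) ^ 2) -
      (∫ s in (0:ℝ)..r, g s) * (h r) ^ 2) =
      fun r => (∫ s in (0:ℝ)..r, g (r - s) * (h s) ^ 2) -
        2 * h r * ∫ s in (0:ℝ)..r, g (r - s) * h s := by
    funext r
    have hgr : Continuous fun s => g (r - s) :=
      hgc.comp (continuous_const.sub continuous_id)
    have e0 : (∫ s in (0:ℝ)..r, g (r - s)) = ∫ s in (0:ℝ)..r, g s := by
      rw [intervalIntegral.integral_comp_sub_left (fun x => g x) r]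
      simp
    have expand : (∫ s in (0:ℝ)..r, g (r - s) * (h r - h s) ^ 2) =
        (h r) ^ 2 * (∫ s in (0:ℝ)..r, g (r - s)) -
          2 * h r * (∫ s in (0:ℝ)..r, g (r - s) * h s) +
          ∫ s in (0:ℝ)..r, g (r - s) * (h s) ^ 2 := by
      rw [← intervalIntegral.integral_const_mul, ← intervalIntegral.integral_const_mul,
        ← intervalIntegral.integral_sub, ← intervalIntegral.integral_add]
      · exact intervalIntegral.integral_congr fun s _ => by ring
      · exact ((continuous_const.mul hgr).sub (continuous_const.mul (hgr.mul hhc))).intervalIntegrable _ _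
      · exact ((hgr.mul hh2c)).intervalIntegrable _ _
      · exact (continuous_const.mul hgr).intervalIntegrable _ _
      · exact (continuous_const.mul (hgr.mul hhc)).intervalIntegrable _ _
    rw [expand, e0]
    ring
  -- derivative of the simplified boxed function
  have Hbox : HasDerivAt (fun r => (∫ s in (0:ℝ)..r, g (r - s) * (h s) ^ 2) -
      2 * h r * ∫ s in (0:ℝ)..r, g (r - s) * h s)
      ((g 0 * (h t) ^ 2 + ∫ s in (0:ℝ)..t, deriv g (t - s) * (h s) ^ 2) -
        ((2 * deriv h t) * (∫ s in (0:ℝ)..t, g (t - s) * h s) +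
          (2 * h t) * (g 0 * h t + ∫ s in (0:ℝ)..t, deriv g (t - s) * h s))) t :=
    Dh2.sub ((hd.const_mul 2).mul Dh)
  have hderiv : deriv (fun r =>
      (∫ s in (0:ℝ)..r, g (r - s) * (h r - h s) ^ 2) -
        (∫ s in (0:ℝ)..r, g s) * (h r) ^ 2) t =
      (g 0 * (h t) ^ 2 + ∫ s in (0:ℝ)..t, deriv g (t - s) * (h s) ^ 2) -
        ((2 * deriv h t) * (∫ s in (0:ℝ)..t, g (t - s) * h s) +
          (2 * h t) * (g 0 * h t + ∫ s in (0:ℝ)..t, deriv g (t - s) * h s)) := by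
    rw [hbox]; exact Hbox.deriv
  -- expand the diamond term
  have e1 : (∫ s in (0:ℝ)..t, deriv g (t - s)) = g t - g 0 := by
    rw [intervalIntegral.integral_comp_sub_left (fun x => deriv g x) t]
    simp only [sub_self, sub_zero]
    exact intervalIntegral.integral_deriv_eq_sub (fun x _ => (hg.differentiable one_ne_zero) x)
      (hg'.intervalIntegrable _ _)
  have hgt' : Continuous fun s => deriv g (t - s) :=
    hg'.comp (continuous_const.sub continuous_id)
  have expand2 : (∫ s in (0:ℝ)..t, deriv g (t - s) * (h t - h s) ^ 2) =
      (h t) ^ 2 * (g t - g 0) -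
        2 * h t * (∫ s in (0:ℝ)..t, deriv g (t - s) * h s) +
        ∫ s in (0:ℝ)..t, deriv g (t - s) * (h s) ^ 2 := by
    rw [← e1, ← intervalIntegral.integral_const_mul, ← intervalIntegral.integral_const_mul,
      ← intervalIntegral.integral_sub, ← intervalIntegral.integral_add]
    · exact intervalIntegral.integral_congr fun s _ => by ring
    · exact ((continuous_const.mul hgt').sub (continuous_const.mul (hgt'.mul hhc))).intervalIntegrable _ _
    · exact ((hgt'.mul hh2c)).intervalIntegrable _ _
    · exact (continuous_const.mul hgt').intervalIntegrable _ _
    · exact (continuous_const.mul (hgt'.mul hhc)).intervalIntegrable _ _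
  rw [hderiv, expand2]
  ring
end

section
/- Fix reals 0 < L₁ < L₂ < L₃, set Ω = (0,L₁) ∪ (L₂,L₃), fix τ > 0, and let u : ([0,L₁] ∪ [L₂,L₃]) × [−τ,∞) → ℝ be of class C². Set z(x,ρ,t) := u_t(x, t−τρ) and define F₃(t) := τ·∫_Ω ∫₀¹ e^{−τρ} z(x,ρ,t)² dρ dx, where ∫_Ω f dx := ∫₀^{L₁} f dx + ∫_{L₂}^{L₃} f dx. Then for every t > 0: F₃'(t) ≤ −e^{−τ}·( ∫_Ω z(x,1,t)² dx + τ·∫_Ω ∫₀¹ z(x,ρ,t)² dρ dx ) + ∫_Ω u_t(x,t)² dx. -/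
open intervalIntegral
open MeasureTheory Set

/-- substitution `s = r - τρ` -/
lemma aux_subst {τ r : ℝ} (hτ : 0 < τ) {g : ℝ → ℝ} (hg : Continuous g) :
    ∫ ρ in (0:ℝ)..1, g (r - τ * ρ) = τ⁻¹ * ∫ s in (r - τ)..r, g s := by
  have hder : ∀ x ∈ uIcc (0:ℝ) 1, HasDerivAt (fun ρ => r - τ * ρ) (-τ) x := by
    intro x _
    simpa using (((hasDerivAt_id x).const_mul τ).const_sub r)
  have h := integral_comp_smul_deriv hder continuousOn_const hg
  simp only [Function.comp, smul_eq_mul] at h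
  rw [intervalIntegral.integral_const_mul] at h
  have h0 : r - τ * 0 = r := by ring
  have h1 : r - τ * 1 = r - τ := by ring
  rw [h0, h1, intervalIntegral.integral_symm (r - τ) r] at h
  have hτ' : τ ≠ 0 := ne_of_gt hτ
  field_simp at h ⊢
  try linarith

/-- Fubini for interval integrals of continuous functions -/
lemma aux_swap {a b c d : ℝ} (hab : a ≤ b) (hcd : c ≤ d) {F : ℝ → ℝ → ℝ}
    (hF : Continuous (Function.uncurry F)) :
    ∫ x in a..b, ∫ s in c..d, F x s = ∫ s in c..d, ∫ x in a..b, F x s := by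
  rw [intervalIntegral.integral_of_le hab, intervalIntegral.integral_of_le hcd]
  simp only [intervalIntegral.integral_of_le hab, intervalIntegral.integral_of_le hcd]
  apply MeasureTheory.integral_integral_swap
  rw [Measure.prod_restrict]
  apply (hF.continuousOn.integrableOn_compact (isCompact_Icc.prod isCompact_Icc)).mono_set
  exact Set.prod_mono Set.Ioc_subset_Icc_self Set.Ioc_subset_Icc_self

/-- The core computation, with the time-derivative replaced by an everywhere
continuous function `G`. -/
lemma core_stmt12 (L1 L2 L3 τ : ℝ) (h1 : 0 < L1) (h2 : L1 < L2) (h3 : L2 < L3) (hτ : 0 < τ)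
    (u : ℝ → ℝ → ℝ) (G : ℝ × ℝ → ℝ) (hG : Continuous G)
    (hderiv : ∀ x ∈ Set.Icc 0 L1 ∪ Set.Icc L2 L3, ∀ s : ℝ, -τ < s →
      deriv (u x) s = G (x, s))
    (t : ℝ) (ht : 0 < t) :
    ∃ d, HasDerivAt
        (fun r => τ *
          ((∫ x in (0:ℝ)..L1, ∫ ρ in (0:ℝ)..1, Real.exp (-τ * ρ) * (deriv (u x) (r - τ * ρ)) ^ 2)
            + ∫ x in L2..L3, ∫ ρ in (0:ℝ)..1, Real.exp (-τ * ρ) * (deriv (u x) (r - τ * ρ)) ^ 2))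
        d t ∧
      d ≤ -Real.exp (-τ) *
            (((∫ x in (0:ℝ)..L1, (deriv (u x) (t - τ)) ^ 2)
                + ∫ x in L2..L3, (deriv (u x) (t - τ)) ^ 2)
              + τ * ((∫ x in (0:ℝ)..L1, ∫ ρ in (0:ℝ)..1, (deriv (u x) (t - τ * ρ)) ^ 2)
                + ∫ x in L2..L3, ∫ ρ in (0:ℝ)..1, (deriv (u x) (t - τ * ρ)) ^ 2))
          + ((∫ x in (0:ℝ)..L1, (deriv (u x) t) ^ 2) + ∫ x in L2..L3, (deriv (u x) t) ^ 2) := by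
  have hτ' : τ ≠ 0 := ne_of_gt hτ
  -- continuity of the partial space integrals
  have hP1 : Continuous fun s : ℝ => ∫ x in (0:ℝ)..L1, G (x, s) ^ 2 :=
    intervalIntegral.continuous_parametric_intervalIntegral_of_continuous'
      (f := fun (s x : ℝ) => G (x, s) ^ 2) (by fun_prop) 0 L1
  have hP2 : Continuous fun s : ℝ => ∫ x in L2..L3, G (x, s) ^ 2 :=
    intervalIntegral.continuous_parametric_intervalIntegral_of_continuous'
      (f := fun (s x : ℝ) => G (x, s) ^ 2) (by fun_prop) L2 L3
  have hψ : Continuous fun s : ℝ =>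
      (∫ x in (0:ℝ)..L1, G (x, s) ^ 2) + ∫ x in L2..L3, G (x, s) ^ 2 := hP1.add hP2
  have hψ0 : ∀ s : ℝ, 0 ≤ (∫ x in (0:ℝ)..L1, G (x, s) ^ 2) + ∫ x in L2..L3, G (x, s) ^ 2 :=
    fun s => add_nonneg
      (intervalIntegral.integral_nonneg h1.le fun x _ => sq_nonneg _)
      (intervalIntegral.integral_nonneg h3.le fun x _ => sq_nonneg _)
  have hF : Continuous fun s : ℝ =>
      Real.exp s * ((∫ x in (0:ℝ)..L1, G (x, s) ^ 2) + ∫ x in L2..L3, G (x, s) ^ 2) :=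
    Real.continuous_exp.mul hψ
  -- the block computation
  have block : ∀ (v : ℝ → ℝ), Continuous v → ∀ r : ℝ, 0 < r → ∀ a b : ℝ, a ≤ b →
      Set.Icc a b ⊆ Set.Icc 0 L1 ∪ Set.Icc L2 L3 → ∀ (B : ℝ → ℝ → ℝ),
      (∀ x ∈ Set.Icc a b, ∀ ρ ∈ Set.Icc (0:ℝ) 1,
        B x ρ = v (r - τ * ρ) * (deriv (u x) (r - τ * ρ)) ^ 2) →
      (∫ x in a..b, ∫ ρ in (0:ℝ)..1, B x ρ)
        = τ⁻¹ * ∫ s in (r - τ)..r, v s * ∫ x in a..b, G (x, s) ^ 2 := by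
    intro v hv r hr a b hab hsub B hB
    have step1 : ∀ x ∈ Set.Icc a b,
        (∫ ρ in (0:ℝ)..1, B x ρ)
          = τ⁻¹ * ∫ s in (r - τ)..r, v s * G (x, s) ^ 2 := by
      intro x hx
      have hcong : Set.EqOn (fun ρ => B x ρ)
          (fun ρ => v (r - τ * ρ) * G (x, r - τ * ρ) ^ 2) (Set.uIcc 0 1) := by
        intro ρ hρ
        rw [Set.uIcc_of_le (by norm_num : (0:ℝ) ≤ 1)] at hρ
        have hs : -τ < r - τ * ρ := by nlinarith [hρ.1, hρ.2]
        simp only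
        rw [hB x hx ρ hρ, hderiv x (hsub hx) _ hs]
      rw [intervalIntegral.integral_congr hcong]
      exact aux_subst hτ (g := fun s => v s * G (x, s) ^ 2) (by fun_prop)
    calc (∫ x in a..b, ∫ ρ in (0:ℝ)..1, B x ρ)
        = ∫ x in a..b, τ⁻¹ * ∫ s in (r - τ)..r, v s * G (x, s) ^ 2 := by
          apply intervalIntegral.integral_congr
          intro x hx
          rw [Set.uIcc_of_le hab] at hx
          exact step1 x hx
      _ = τ⁻¹ * ∫ x in a..b, ∫ s in (r - τ)..r, v s * G (x, s) ^ 2 :=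
          intervalIntegral.integral_const_mul _ _
      _ = τ⁻¹ * ∫ s in (r - τ)..r, ∫ x in a..b, v s * G (x, s) ^ 2 := by
          rw [aux_swap hab (by linarith : r - τ ≤ r)
            (F := fun x s => v s * G (x, s) ^ 2) (by fun_prop)]
      _ = τ⁻¹ * ∫ s in (r - τ)..r, v s * ∫ x in a..b, G (x, s) ^ 2 := by
          congr 1
          apply intervalIntegral.integral_congr
          intro s _
          exact intervalIntegral.integral_const_mul _ _
  -- identification of F₃ with a nice function of r, for r > 0
  have claim : ∀ r : ℝ, 0 < r →
      τ * ((∫ x in (0:ℝ)..L1, ∫ ρ in (0:ℝ)..1,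
              Real.exp (-τ * ρ) * (deriv (u x) (r - τ * ρ)) ^ 2)
          + ∫ x in L2..L3, ∫ ρ in (0:ℝ)..1,
              Real.exp (-τ * ρ) * (deriv (u x) (r - τ * ρ)) ^ 2)
      = Real.exp (-r) * ∫ s in (r - τ)..r,
          Real.exp s * ((∫ x in (0:ℝ)..L1, G (x, s) ^ 2) + ∫ x in L2..L3, G (x, s) ^ 2) := by
    intro r hr
    have hBe : ∀ (x ρ : ℝ), Real.exp (-τ * ρ) * (deriv (u x) (r - τ * ρ)) ^ 2
        = (fun s => Real.exp (s - r)) (r - τ * ρ) * (deriv (u x) (r - τ * ρ)) ^ 2 := by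
      intro x ρ
      show Real.exp (-τ * ρ) * (deriv (u x) (r - τ * ρ)) ^ 2
        = Real.exp ((r - τ * ρ) - r) * (deriv (u x) (r - τ * ρ)) ^ 2
      rw [show (r - τ * ρ) - r = -τ * ρ by ring]
    have hb1 := block (fun s => Real.exp (s - r)) (by fun_prop) r hr 0 L1 h1.le
      Set.subset_union_left _ (fun x _ ρ _ => hBe x ρ)
    have hb2 := block (fun s => Real.exp (s - r)) (by fun_prop) r hr L2 L3 h3.le
      Set.subset_union_right _ (fun x _ ρ _ => hBe x ρ)
    rw [hb1, hb2]
    beta_reduce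
    have hi1 : IntervalIntegrable
        (fun s => Real.exp (s - r) * ∫ x in (0:ℝ)..L1, G (x, s) ^ 2) volume (r - τ) r :=
      (((Real.continuous_exp.comp (continuous_id.sub continuous_const)).mul hP1)).intervalIntegrable _ _
    have hi2 : IntervalIntegrable
        (fun s => Real.exp (s - r) * ∫ x in L2..L3, G (x, s) ^ 2) volume (r - τ) r :=
      (((Real.continuous_exp.comp (continuous_id.sub continuous_const)).mul hP2)).intervalIntegrable _ _
    rw [mul_add, ← mul_assoc, mul_inv_cancel₀ hτ', one_mul, ← mul_assoc,
      mul_inv_cancel₀ hτ', one_mul, ← intervalIntegral.integral_add hi1 hi2,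
      ← intervalIntegral.integral_const_mul]
    apply intervalIntegral.integral_congr
    intro s _
    have he : Real.exp (-r) * Real.exp s = Real.exp (s - r) := by
      rw [← Real.exp_add]; congr 1; ring
    simp only
    rw [← he]
    ring
  -- FTC derivative of the primitive
  have hA : ∀ y : ℝ, HasDerivAt (fun r : ℝ => ∫ s in (0:ℝ)..r,
      Real.exp s * ((∫ x in (0:ℝ)..L1, G (x, s) ^ 2) + ∫ x in L2..L3, G (x, s) ^ 2)) (Real.exp y * ((∫ x in (0:ℝ)..L1, G (x, y) ^ 2) + ∫ x in L2..L3, G (x, y) ^ 2)) y :=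
    fun y => (hF.integral_hasStrictDerivAt 0 y).hasDerivAt
  have hWA : ∀ r : ℝ, (∫ s in (r - τ)..r,
        Real.exp s * ((∫ x in (0:ℝ)..L1, G (x, s) ^ 2) + ∫ x in L2..L3, G (x, s) ^ 2))
      = (∫ s in (0:ℝ)..r,
          Real.exp s * ((∫ x in (0:ℝ)..L1, G (x, s) ^ 2) + ∫ x in L2..L3, G (x, s) ^ 2))
        - ∫ s in (0:ℝ)..(r - τ),
            Real.exp s * ((∫ x in (0:ℝ)..L1, G (x, s) ^ 2) + ∫ x in L2..L3, G (x, s) ^ 2) :=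
    fun r => (intervalIntegral.integral_interval_sub_left
      (hF.intervalIntegrable 0 r) (hF.intervalIntegrable 0 (r - τ))).symm
  have hWd : HasDerivAt (fun r : ℝ => ∫ s in (r - τ)..r,
      Real.exp s * ((∫ x in (0:ℝ)..L1, G (x, s) ^ 2) + ∫ x in L2..L3, G (x, s) ^ 2))
      ((Real.exp t * ((∫ x in (0:ℝ)..L1, G (x, t) ^ 2) + ∫ x in L2..L3, G (x, t) ^ 2))
        - Real.exp (t - τ) * ((∫ x in (0:ℝ)..L1, G (x, t - τ) ^ 2)
            + ∫ x in L2..L3, G (x, t - τ) ^ 2)) t := by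
    have h2 : HasDerivAt (fun r : ℝ => ∫ s in (0:ℝ)..(r - τ),
        Real.exp s * ((∫ x in (0:ℝ)..L1, G (x, s) ^ 2) + ∫ x in L2..L3, G (x, s) ^ 2))
        (Real.exp (t - τ) * ((∫ x in (0:ℝ)..L1, G (x, t - τ) ^ 2)
          + ∫ x in L2..L3, G (x, t - τ) ^ 2)) t := by
      have := (hA (t - τ)).comp t ((hasDerivAt_id t).sub_const τ)
      simpa [Function.comp_def] using this
    have hsub := (hA t).sub h2
    apply hsub.congr_of_eventuallyEq
    exact Filter.Eventually.of_forall hWA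
  have hexp : HasDerivAt (fun r : ℝ => Real.exp (-r)) (-Real.exp (-t)) t := by
    simpa [Function.comp_def] using (Real.hasDerivAt_exp (-t)).comp t ((hasDerivAt_id t).neg)
  have hΨd := hexp.mul hWd
  -- transfer the derivative to the original function
  have hEq : (fun r => τ *
        ((∫ x in (0:ℝ)..L1, ∫ ρ in (0:ℝ)..1,
            Real.exp (-τ * ρ) * (deriv (u x) (r - τ * ρ)) ^ 2)
          + ∫ x in L2..L3, ∫ ρ in (0:ℝ)..1,
              Real.exp (-τ * ρ) * (deriv (u x) (r - τ * ρ)) ^ 2))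
      =ᶠ[nhds t] fun r => Real.exp (-r) * ∫ s in (r - τ)..r,
          Real.exp s * ((∫ x in (0:ℝ)..L1, G (x, s) ^ 2) + ∫ x in L2..L3, G (x, s) ^ 2) := by
    filter_upwards [Ioi_mem_nhds ht] with r hr using claim r hr
  refine ⟨_, hΨd.congr_of_eventuallyEq hEq, ?_⟩
  -- now the inequality
  -- rewrite the right-hand side in terms of G
  have hR1 : (∫ x in (0:ℝ)..L1, (deriv (u x) (t - τ)) ^ 2)
      = ∫ x in (0:ℝ)..L1, G (x, t - τ) ^ 2 := by
    apply intervalIntegral.integral_congr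
    intro x hx
    rw [Set.uIcc_of_le h1.le] at hx
    simp only
    rw [hderiv x (Set.subset_union_left hx) _ (by linarith)]
  have hR2 : (∫ x in L2..L3, (deriv (u x) (t - τ)) ^ 2)
      = ∫ x in L2..L3, G (x, t - τ) ^ 2 := by
    apply intervalIntegral.integral_congr
    intro x hx
    rw [Set.uIcc_of_le h3.le] at hx
    simp only
    rw [hderiv x (Set.subset_union_right hx) _ (by linarith)]
  have hR3 : (∫ x in (0:ℝ)..L1, (deriv (u x) t) ^ 2)
      = ∫ x in (0:ℝ)..L1, G (x, t) ^ 2 := by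
    apply intervalIntegral.integral_congr
    intro x hx
    rw [Set.uIcc_of_le h1.le] at hx
    simp only
    rw [hderiv x (Set.subset_union_left hx) _ (by linarith)]
  have hR4 : (∫ x in L2..L3, (deriv (u x) t) ^ 2)
      = ∫ x in L2..L3, G (x, t) ^ 2 := by
    apply intervalIntegral.integral_congr
    intro x hx
    rw [Set.uIcc_of_le h3.le] at hx
    simp only
    rw [hderiv x (Set.subset_union_right hx) _ (by linarith)]
  have hZ1 := block (fun _ => (1:ℝ)) continuous_const t ht 0 L1 h1.le
    Set.subset_union_left (fun x ρ => (deriv (u x) (t - τ * ρ)) ^ 2)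
    (fun x _ ρ _ => (one_mul _).symm)
  have hZ2 := block (fun _ => (1:ℝ)) continuous_const t ht L2 L3 h3.le
    Set.subset_union_right (fun x ρ => (deriv (u x) (t - τ * ρ)) ^ 2)
    (fun x _ ρ _ => (one_mul _).symm)
  simp only [one_mul] at hZ1 hZ2
  rw [hR1, hR2, hR3, hR4, hZ1, hZ2]
  have hQ1 : IntervalIntegrable (fun s => ∫ x in (0:ℝ)..L1, G (x, s) ^ 2)
      volume (t - τ) t := hP1.intervalIntegrable _ _
  have hQ2 : IntervalIntegrable (fun s => ∫ x in L2..L3, G (x, s) ^ 2)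
      volume (t - τ) t := hP2.intervalIntegrable _ _
  have hJ : τ * ((τ⁻¹ * ∫ s in (t - τ)..t, ∫ x in (0:ℝ)..L1, G (x, s) ^ 2)
        + τ⁻¹ * ∫ s in (t - τ)..t, ∫ x in L2..L3, G (x, s) ^ 2)
      = ∫ s in (t - τ)..t,
          ((∫ x in (0:ℝ)..L1, G (x, s) ^ 2) + ∫ x in L2..L3, G (x, s) ^ 2) := by
    rw [mul_add, ← mul_assoc, mul_inv_cancel₀ hτ', one_mul, ← mul_assoc,
      mul_inv_cancel₀ hτ', one_mul, intervalIntegral.integral_add hQ1 hQ2]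
  rw [hJ]
  -- the key inequality
  have hkey : Real.exp (-τ) * ∫ s in (t - τ)..t,
        ((∫ x in (0:ℝ)..L1, G (x, s) ^ 2) + ∫ x in L2..L3, G (x, s) ^ 2)
      ≤ Real.exp (-t) * ∫ s in (t - τ)..t,
          Real.exp s * ((∫ x in (0:ℝ)..L1, G (x, s) ^ 2) + ∫ x in L2..L3, G (x, s) ^ 2) := by
    rw [← intervalIntegral.integral_const_mul, ← intervalIntegral.integral_const_mul]
    apply intervalIntegral.integral_mono_on (by linarith)
      ((continuous_const.mul hψ).intervalIntegrable _ _)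
      ((continuous_const.mul hF).intervalIntegrable _ _)
    intro s hs
    have he : Real.exp (-t) * (Real.exp s *
        ((∫ x in (0:ℝ)..L1, G (x, s) ^ 2) + ∫ x in L2..L3, G (x, s) ^ 2))
        = Real.exp (s - t) * ((∫ x in (0:ℝ)..L1, G (x, s) ^ 2) + ∫ x in L2..L3, G (x, s) ^ 2) := by
      rw [← mul_assoc, ← Real.exp_add]
      congr 2
      ring
    simp only [Pi.mul_apply]
    rw [he]
    exact mul_le_mul_of_nonneg_right (Real.exp_le_exp.2 (by linarith [hs.1])) (hψ0 s)
  have hM1 : Real.exp (-t) * Real.exp t = 1 := by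
    rw [← Real.exp_add]; simp
  have hM2 : Real.exp (-t) * Real.exp (t - τ) = Real.exp (-τ) := by
    rw [← Real.exp_add]; congr 1; ring
  have hexpand : Real.exp (-t) *
      (Real.exp t * ((∫ x in (0:ℝ)..L1, G (x, t) ^ 2) + ∫ x in L2..L3, G (x, t) ^ 2)
        - Real.exp (t - τ) * ((∫ x in (0:ℝ)..L1, G (x, t - τ) ^ 2)
            + ∫ x in L2..L3, G (x, t - τ) ^ 2))
      = ((∫ x in (0:ℝ)..L1, G (x, t) ^ 2) + ∫ x in L2..L3, G (x, t) ^ 2)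
        - Real.exp (-τ) * ((∫ x in (0:ℝ)..L1, G (x, t - τ) ^ 2)
            + ∫ x in L2..L3, G (x, t - τ) ^ 2) := by
    rw [mul_sub, ← mul_assoc, hM1, one_mul, ← mul_assoc, hM2]
  rw [hexpand]
  linarith [hkey]


/-- fix `0 < L₁ < L₂ < L₃`, `Ω = (0,L₁) ∪ (L₂,L₃)`, `τ > 0`, and
`u : ([0,L₁] ∪ [L₂,L₃]) × [−τ,∞) → ℝ` of class `C²`. With `z(x,ρ,t) := u_t(x, t−τρ)` and
`F₃(t) := τ∫_Ω ∫₀¹ e^{−τρ} z(x,ρ,t)² dρ dx` (where `∫_Ω f := ∫₀^{L₁} f + ∫_{L₂}^{L₃} f`),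
for every `t > 0`:
`F₃'(t) ≤ −e^{−τ}(∫_Ω z(·,1,t)² + τ∫_Ω ∫₀¹ z(·,ρ,t)² dρ) + ∫_Ω u_t(·,t)²`. -/
theorem stmt12 (L1 L2 L3 τ : ℝ) (h1 : 0 < L1) (h2 : L1 < L2) (h3 : L2 < L3) (hτ : 0 < τ)
    (u : ℝ → ℝ → ℝ)
    (hu : ContDiffOn ℝ 2 (Function.uncurry u)
      ((Set.Icc 0 L1 ∪ Set.Icc L2 L3) ×ˢ Set.Ici (-τ)))
    (t : ℝ) (ht : 0 < t) :
    ∃ d, HasDerivAt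
        (fun r => τ *
          ((∫ x in (0:ℝ)..L1, ∫ ρ in (0:ℝ)..1, Real.exp (-τ * ρ) * (deriv (u x) (r - τ * ρ)) ^ 2)
            + ∫ x in L2..L3, ∫ ρ in (0:ℝ)..1, Real.exp (-τ * ρ) * (deriv (u x) (r - τ * ρ)) ^ 2))
        d t ∧
      d ≤ -Real.exp (-τ) *
            (((∫ x in (0:ℝ)..L1, (deriv (u x) (t - τ)) ^ 2)
                + ∫ x in L2..L3, (deriv (u x) (t - τ)) ^ 2)
              + τ * ((∫ x in (0:ℝ)..L1, ∫ ρ in (0:ℝ)..1, (deriv (u x) (t - τ * ρ)) ^ 2)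
                + ∫ x in L2..L3, ∫ ρ in (0:ℝ)..1, (deriv (u x) (t - τ * ρ)) ^ 2))
          + ((∫ x in (0:ℝ)..L1, (deriv (u x) t) ^ 2) + ∫ x in L2..L3, (deriv (u x) t) ^ 2) := by
  set S : Set (ℝ × ℝ) := (Set.Icc 0 L1 ∪ Set.Icc L2 L3) ×ˢ Set.Ici (-τ) with hSdef
  have hSu : UniqueDiffOn ℝ S := by
    rintro ⟨x, s⟩ ⟨hx, hs⟩
    have hx' : UniqueDiffWithinAt ℝ (Set.Icc 0 L1 ∪ Set.Icc L2 L3) x := by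
      rcases hx with hx | hx
      · exact ((uniqueDiffOn_Icc h1) x hx).mono Set.subset_union_left
      · exact ((uniqueDiffOn_Icc h3) x hx).mono Set.subset_union_right
    exact hx'.prod ((uniqueDiffOn_Ici (-τ)) s hs)
  set D : ℝ × ℝ → ℝ := fun p => fderivWithin ℝ (Function.uncurry u) S p (0, 1) with hDdef
  have hDc : ContinuousOn D S :=
    (hu.continuousOn_fderivWithin hSu (by norm_num)).clm_apply continuousOn_const
  have key : ∀ x ∈ Set.Icc 0 L1 ∪ Set.Icc L2 L3, ∀ s : ℝ, -τ < s →
      HasDerivAt (u x) (D (x, s)) s := by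
    intro x hx s hs
    have hmem : (x, s) ∈ S := ⟨hx, le_of_lt hs⟩
    have hdiff : DifferentiableWithinAt ℝ (Function.uncurry u) S (x, s) :=
      (hu.differentiableOn (by norm_num)) _ hmem
    have hι : HasDerivWithinAt (fun s' : ℝ => (x, s')) ((0:ℝ), (1:ℝ)) (Set.Ici (-τ)) s :=
      ((hasDerivAt_const s x).prodMk (hasDerivAt_id s)).hasDerivWithinAt
    have hmaps : Set.MapsTo (fun s' : ℝ => (x, s')) (Set.Ici (-τ)) S :=
      fun s' hs' => ⟨hx, hs'⟩
    have hcomp := hdiff.hasFDerivWithinAt.comp_hasDerivWithinAt s hι hmaps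
    exact hcomp.hasDerivAt (Ici_mem_nhds hs)
  have hSclosed : IsClosed S := (isClosed_Icc.union isClosed_Icc).prod isClosed_Ici
  obtain ⟨Gc, hGc⟩ := ContinuousMap.exists_restrict_eq (Y := ℝ) hSclosed
    ⟨S.restrict D, hDc.restrict⟩
  have hderiv : ∀ x ∈ Set.Icc 0 L1 ∪ Set.Icc L2 L3, ∀ s : ℝ, -τ < s →
      deriv (u x) s = Gc (x, s) := by
    intro x hx s hs
    rw [(key x hx s hs).deriv]
    exact (ContinuousMap.congr_fun hGc ⟨(x, s), ⟨hx, le_of_lt hs⟩⟩).symm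
  exact core_stmt12 L1 L2 L3 τ h1 h2 h3 hτ u (fun p => Gc p) Gc.continuous hderiv t ht
end
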